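/- Let G be a monoid acting on a set X and let φ be a special filter on X with ⋂φ = {x_0}. Then the topology τ_φ, consisting of all sets U⊆X such that for every g∈G with g•x_0∈U the preimage {x∈X : g•x∈U} belongs to φ, satisfies the separation axiom T1: every singleton subset of X is τ_φ-closed. -/

import Mathlib

open Topology Cardinal

universe u

/-- An injective transfinite sequence `(x_α)_{α<κ}` of points of a `G`-act `X` is *special*
(with least index `i₀`) if there is an enumeration `G = {g_α}_{α<κ}` of the monoid `G` such
that for all `α < κ` and all `β, γ, δ < α`:
(1) if `g_β • x_{i₀} ≠ g_γ • x_{i₀}` then `g_β • x_α ≠ g_γ • x_α`, and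
(2) if `g_β • x_{i₀} ≠ g_γ • x_δ` then `g_β • x_α ≠ g_γ • x_δ`. -/
def IsSpecialSeq (G : Type u) {X : Type u} [Monoid G] [MulAction G X] (κ : Cardinal.{u})
    (x : κ.ord.ToType → X) (i₀ : κ.ord.ToType) : Prop :=
  (∀ i, i₀ ≤ i) ∧ Function.Injective x ∧
  ∃ g : κ.ord.ToType → G, Function.Surjective g ∧
    ∀ α β γ δ : κ.ord.ToType, β < α → γ < α → δ < α →
      (g β • x i₀ ≠ g γ • x i₀ → g β • x α ≠ g γ • x α) ∧
      (g β • x i₀ ≠ g γ • x δ → g β • x α ≠ g γ • x δ)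

/-- A filter `φ` on a `G`-act `X` is *special* (with `⋂ φ = {x₀}`) if for some cardinal `κ`
there is a special sequence `(x_α)_{α<κ}` in `X` with first term `x₀` such that
`⋂ φ = {x₀}` and `{x₀} ∪ {x_β : α < β < κ} ∈ φ` for all `α < κ`. -/
def IsSpecialFilter (G : Type u) {X : Type u} [Monoid G] [MulAction G X]
    (φ : Filter X) (x₀ : X) : Prop :=
  ∃ (κ : Cardinal.{u}) (x : κ.ord.ToType → X) (i₀ : κ.ord.ToType),
    IsSpecialSeq G κ x i₀ ∧ x i₀ = x₀ ∧ ⋂₀ φ.sets = {x₀} ∧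
    ∀ α : κ.ord.ToType, insert x₀ (x '' Set.Ioi α) ∈ φ

/-- The topology `τ_φ`. -/
def tauPhi (G X : Type*) [Monoid G] [MulAction G X] (x₀ : X) (φ : Filter X) :
    TopologicalSpace X where
  IsOpen U := ∀ g : G, g • x₀ ∈ U → {x : X | g • x ∈ U} ∈ φ
  isOpen_univ := fun _ _ => Filter.univ_mem' fun _ => trivial
  isOpen_inter := fun U V hU hV g hg =>
    Filter.inter_mem (hU g hg.1) (hV g hg.2)
  isOpen_sUnion := fun S hS g hg => by
    obtain ⟨t, htS, hgt⟩ := hg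
    exact Filter.mem_of_superset (hS t htS g hgt) fun x hx => ⟨t, htS, hx⟩

/-- If `φ` is a special filter on a `G`-act `X` with `⋂ φ = {x₀}`, then the topology
`τ_φ` satisfies the separation axiom `T₁`: every singleton is closed. -/
theorem tauPhi_t1_of_specialFilter {G X : Type u} [Monoid G] [MulAction G X]
    (φ : Filter X) (x₀ : X) (hφ : IsSpecialFilter G φ x₀) :
    ∀ y : X, IsClosed[tauPhi G X x₀ φ] {y} := by
  obtain ⟨κ, x, i₀, ⟨hi₀, hinj, g, hgsurj, hspec⟩, hx0, hInt, htail⟩ := hφ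
  intro y
  refine @IsClosed.mk X (tauPhi G X x₀ φ) {y} ?_
  show ∀ a : G, a • x₀ ∈ ({y}ᶜ : Set X) → {z : X | a • z ∈ ({y}ᶜ : Set X)} ∈ φ
  intro a ha
  obtain ⟨μ, rfl⟩ := hgsurj a
  have hax0 : g μ • x₀ ≠ y := ha
  by_cases hy : ∃ γ δ, g γ • x δ = y
  · obtain ⟨γ, δ, hyd⟩ := hy
    refine Filter.mem_of_superset (htail (max μ (max γ δ))) ?_
    rintro z (rfl | ⟨β, hβ, rfl⟩)
    · exact hax0
    · have hμ : μ < β := lt_of_le_of_lt (le_max_left _ _) hβ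
      have hγ : γ < β := lt_of_le_of_lt ((le_max_left _ _).trans (le_max_right _ _)) hβ
      have hδ : δ < β := lt_of_le_of_lt ((le_max_right _ _).trans (le_max_right _ _)) hβ
      have := (hspec β μ γ δ hμ hγ hδ).2
      rw [hx0, hyd] at this
      exact this hax0
  · refine Filter.mem_of_superset (htail i₀) ?_
    rintro z (rfl | ⟨β, _, rfl⟩)
    · exact hax0
    · exact fun h => hy ⟨μ, β, h⟩
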